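/- (Lemma 6.3) Let f : ℝ^n → ℝ be differentiable and coordinate-wise smooth with parameters (L_1,…,L_n), each L_i > 0. Fix β ∈ [0,1], set α := (1−β)/2, S_α := Σ_{i=1}^n L_i^α, p_i := L_i^α/S_α. Fix η > 0 and vectors z_k, x_{k+1} ∈ ℝ^n. For each i define y^{(i)} := x_{k+1} − (1/L_i)·∇_i f(x_{k+1})·e_i and z^{(i)} := z_k − (η/(p_i·L_i^β))·∇_i f(x_{k+1})·e_i. Then for every u ∈ ℝ^n: η·⟨∇f(x_{k+1}), z_k − u⟩ ≤ η²·S_α²·( f(x_{k+1}) − Σ_{i=1}^n p_i·f(y^{(i)}) ) + (1/2)‖z_k − u‖²_{L_β} − (1/2)·Σ_{i=1}^n p_i·‖z^{(i)} − u‖²_{L_β}. -/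

import Mathlib

/-- The i-th standard basis vector of ℝ^n. -/
def basisVec {n : ℕ} (i : Fin n) : Fin n → ℝ := Pi.single i 1

/-- The i-th partial derivative ∇_i f(x). -/
noncomputable def coordGrad {n : ℕ} (f : (Fin n → ℝ) → ℝ) (x : Fin n → ℝ) (i : Fin n) : ℝ :=
  fderiv ℝ f x (basisVec i)

/-- f is coordinate-wise smooth with parameters (L_1, …, L_n):
`|∇_i f(x + δ e_i) − ∇_i f(x)| ≤ L_i |δ|` for all x, δ, i. -/
def CoordSmooth {n : ℕ} (f : (Fin n → ℝ) → ℝ) (L : Fin n → ℝ) : Prop :=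
  ∀ (x : Fin n → ℝ) (δ : ℝ) (i : Fin n),
    |coordGrad f (x + δ • basisVec i) i - coordGrad f x i| ≤ L i * |δ|

/-- Weighted squared norm ‖v‖²_{L_β} := Σ_i L_i^β · v_i². -/
noncomputable def wnormSq {n : ℕ} (L : Fin n → ℝ) (β : ℝ) (v : Fin n → ℝ) : ℝ :=
  ∑ i, L i ^ β * v i ^ 2

lemma quad_upper (g g' : ℝ → ℝ) (hg : ∀ t, HasDerivAt g (g' t) t)
    (L δ : ℝ) (hlip : ∀ t, |g' t - g' 0| ≤ L * |t|) :
    g δ ≤ g 0 + g' 0 * δ + L / 2 * δ ^ 2 := by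
  have hd : ∀ t, HasDerivAt (fun t => g t - g' 0 * t - L / 2 * t ^ 2) (g' t - g' 0 - L * t) t := by
    intro t
    have h1 : HasDerivAt (fun t : ℝ => g' 0 * t) (g' 0) t := by
      simpa using (hasDerivAt_id t).const_mul (g' 0)
    have h2 : HasDerivAt (fun t : ℝ => L / 2 * t ^ 2) (L * t) t := by
      have := (hasDerivAt_pow 2 t).const_mul (L / 2)
      refine this.congr_deriv ?_
      ring
    exact ((hg t).sub h1).sub h2
  have hcont : ContinuousOn (fun t => g t - g' 0 * t - L / 2 * t ^ 2) Set.univ :=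
    fun x _ => ((hd x).differentiableAt.continuousAt).continuousWithinAt.mono (Set.subset_univ _)
  rcases le_or_gt 0 δ with hδ | hδ
  · have hanti : AntitoneOn (fun t => g t - g' 0 * t - L / 2 * t ^ 2) (Set.Icc 0 δ) := by
      apply antitoneOn_of_deriv_nonpos (convex_Icc 0 δ) (hcont.mono (Set.subset_univ _))
      · exact fun x _ => (hd x).differentiableAt.differentiableWithinAt
      · intro x hx
        rw [interior_Icc, Set.mem_Ioo] at hx
        rw [(hd x).deriv]
        have h := hlip x
        rw [abs_of_pos hx.1] at h
        have := le_abs_self (g' x - g' 0)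
        linarith
    have := hanti (Set.mem_Icc.2 ⟨le_rfl, hδ⟩) (Set.mem_Icc.2 ⟨hδ, le_rfl⟩) hδ
    simp only at this
    nlinarith [this]
  · have hmono : MonotoneOn (fun t => g t - g' 0 * t - L / 2 * t ^ 2) (Set.Icc δ 0) := by
      apply monotoneOn_of_deriv_nonneg (convex_Icc δ 0) (hcont.mono (Set.subset_univ _))
      · exact fun x _ => (hd x).differentiableAt.differentiableWithinAt
      · intro x hx
        rw [interior_Icc, Set.mem_Ioo] at hx
        rw [(hd x).deriv]
        have h := hlip x
        rw [abs_of_neg hx.2] at h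
        have := neg_abs_le (g' x - g' 0)
        have habs := abs_sub_abs_le_abs_sub (g' x) (g' 0)
        linarith [neg_le_of_abs_le h, (abs_le.1 h).1]
    have := hmono (Set.mem_Icc.2 ⟨le_rfl, hδ.le⟩) (Set.mem_Icc.2 ⟨hδ.le, le_rfl⟩) hδ.le
    simp only at this
    nlinarith [this]

lemma coord_descent {n : ℕ} (f : (Fin n → ℝ) → ℝ) (L : Fin n → ℝ)
    (hf : Differentiable ℝ f) (hsmooth : CoordSmooth f L)
    (x : Fin n → ℝ) (i : Fin n) (δ : ℝ) :
    f (x + δ • basisVec i) ≤ f x + coordGrad f x i * δ + L i / 2 * δ ^ 2 := by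
  have hline : ∀ t : ℝ, HasDerivAt (fun s : ℝ => x + s • basisVec i) (basisVec i) t := by
    intro t
    simpa using ((hasDerivAt_id t).smul_const (basisVec i)).const_add x
  have hg : ∀ t : ℝ, HasDerivAt (fun s : ℝ => f (x + s • basisVec i))
      (coordGrad f (x + t • basisVec i) i) t := by
    intro t
    exact (hf _).hasFDerivAt.comp_hasDerivAt t (hline t)
  have hlip : ∀ t : ℝ, |coordGrad f (x + t • basisVec i) i - coordGrad f (x + (0:ℝ) • basisVec i) i|
      ≤ L i * |t| := by
    intro t
    simpa using hsmooth x t i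
  have key := quad_upper (fun s : ℝ => f (x + s • basisVec i))
    (fun t : ℝ => coordGrad f (x + t • basisVec i) i) hg (L i) δ (by simpa using hlip)
  simpa using key

lemma wnormSq_sub_single {n : ℕ} (L : Fin n → ℝ) (β : ℝ) (v : Fin n → ℝ) (i : Fin n) (c : ℝ) :
    wnormSq L β (v - c • basisVec i)
      = wnormSq L β v - 2 * L i ^ β * c * v i + L i ^ β * c ^ 2 := by
  unfold wnormSq
  have h : ∀ j, L j ^ β * ((v - c • basisVec i) j) ^ 2
      = L j ^ β * (v j) ^ 2 + (if j = i then -(2 * L i ^ β * c * v i) + L i ^ β * c ^ 2 else 0) := by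
    intro j
    by_cases hji : j = i
    · subst hji
      simp only [Pi.sub_apply, Pi.smul_apply, smul_eq_mul, basisVec, Pi.single_eq_same, if_true]
      ring
    · simp [Pi.sub_apply, basisVec, Pi.single_eq_of_ne hji, hji]
  simp only [h, Finset.sum_add_distrib, Finset.sum_ite_eq', Finset.mem_univ, if_pos]
  ring


/-- Lemma 6.3: combining the gradient-descent and mirror-descent guarantees of
NU_ACDM^ns in expectation over the randomly sampled coordinate. -/
theorem stmt_10 (n : ℕ) (f : (Fin n → ℝ) → ℝ) (L : Fin n → ℝ)
    (hf : Differentiable ℝ f) (hL : ∀ i, 0 < L i)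
    (hsmooth : CoordSmooth f L)
    (β : ℝ) (hβ : β ∈ Set.Icc (0 : ℝ) 1)
    (α Sα : ℝ) (hα : α = (1 - β) / 2) (hS : Sα = ∑ i, L i ^ α)
    (p : Fin n → ℝ) (hp : ∀ i, p i = L i ^ α / Sα)
    (η : ℝ) (hη : 0 < η)
    (zk xk1 : Fin n → ℝ)
    (Y Z : Fin n → Fin n → ℝ)
    (hY : ∀ i, Y i = xk1 - (1 / L i * coordGrad f xk1 i) • basisVec i)
    (hZ : ∀ i, Z i = zk - (η / (p i * L i ^ β) * coordGrad f xk1 i) • basisVec i)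
    (u : Fin n → ℝ) :
    η * (∑ i, coordGrad f xk1 i * (zk i - u i))
      ≤ η ^ 2 * Sα ^ 2 * (f xk1 - ∑ i, p i * f (Y i))
        + (1 / 2) * wnormSq L β (zk - u)
        - (1 / 2) * ∑ i, p i * wnormSq L β (Z i - u) := by
  rcases Nat.eq_zero_or_pos n with hn | hn
  · subst hn
    subst hS
    simp [wnormSq]
  · haveI : Nonempty (Fin n) := ⟨⟨0, hn⟩⟩
    have hSpos : 0 < Sα := by
      rw [hS]
      exact Finset.sum_pos (fun i _ => Real.rpow_pos_of_pos (hL i) α) Finset.univ_nonempty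
    have hppos : ∀ i, 0 < p i := fun i => by
      rw [hp i]; exact div_pos (Real.rpow_pos_of_pos (hL i) α) hSpos
    have hLβpos : ∀ i, (0:ℝ) < L i ^ β := fun i => Real.rpow_pos_of_pos (hL i) β
    have hpsum : ∑ i, p i = 1 := by
      simp only [hp]; rw [← Finset.sum_div, ← hS, div_self hSpos.ne']
    have hkey : ∀ i, Sα ^ 2 * p i ^ 2 * L i ^ β = L i := by
      intro i
      have h2 : L i ^ α * L i ^ α * L i ^ β = L i := by
        rw [← Real.rpow_add (hL i), ← Real.rpow_add (hL i),
          show α + α + β = 1 from by rw [hα]; ring, Real.rpow_one]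
      have h3 : Sα ^ 2 * (L i ^ α / Sα) ^ 2 * L i ^ β = L i ^ α * L i ^ α * L i ^ β := by
        rw [div_pow, mul_comm (Sα ^ 2), div_mul_cancel₀ _ (pow_ne_zero 2 hSpos.ne'), sq]
      rw [hp i, h3, h2]
    have hdescent : ∀ i, f (Y i) ≤ f xk1 - coordGrad f xk1 i ^ 2 / (2 * L i) := by
      intro i
      have hYi : Y i = xk1 + (-(1 / L i * coordGrad f xk1 i)) • basisVec i := by
        rw [hY i, sub_eq_add_neg, ← neg_smul]
      rw [hYi]
      have h := coord_descent f L hf hsmooth xk1 i (-(1 / L i * coordGrad f xk1 i))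
      have he : f xk1 + coordGrad f xk1 i * (-(1 / L i * coordGrad f xk1 i))
          + L i / 2 * (-(1 / L i * coordGrad f xk1 i)) ^ 2
          = f xk1 - coordGrad f xk1 i ^ 2 / (2 * L i) := by
        field_simp [(hL i).ne']
        ring
      linarith [h, he.le]
    have hZu : ∀ i, wnormSq L β (Z i - u)
        = wnormSq L β (zk - u)
          - 2 * L i ^ β * (η / (p i * L i ^ β) * coordGrad f xk1 i) * ((zk - u) i)
          + L i ^ β * (η / (p i * L i ^ β) * coordGrad f xk1 i) ^ 2 := by
      intro i
      rw [hZ i, sub_right_comm]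
      exact wnormSq_sub_single L β (zk - u) i _
    have per : ∀ i ∈ Finset.univ, η * (coordGrad f xk1 i * (zk i - u i))
        ≤ η ^ 2 * Sα ^ 2 * (p i * (f xk1 - f (Y i)))
          + 1 / 2 * (p i * wnormSq L β (zk - u))
          - 1 / 2 * (p i * wnormSq L β (Z i - u)) := by
      intro i _
      rw [hZu i]
      set G := coordGrad f xk1 i with hG
      set W := wnormSq L β (zk - u) with hW
      set ci := η / (p i * L i ^ β) * G with hci
      have hden : 0 < p i * L i ^ β := mul_pos (hppos i) (hLβpos i)
      have hvi : (zk - u) i = zk i - u i := rfl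
      have hc1 : p i * L i ^ β * ci = η * G := by
        rw [hci]; field_simp
        exact mul_div_cancel_left₀ G hden.ne'
      have hd' : G ^ 2 / (2 * L i) ≤ f xk1 - f (Y i) := by
        have := hdescent i; linarith
      have h2 : η ^ 2 * G ^ 2 / (2 * (p i * L i ^ β))
          ≤ η ^ 2 * Sα ^ 2 * (p i * (f xk1 - f (Y i))) := by
        have e : η ^ 2 * G ^ 2 / (2 * (p i * L i ^ β))
            = η ^ 2 * Sα ^ 2 * (p i * (G ^ 2 / (2 * L i))) := by
          have hk := hkey i
          field_simp [(hppos i).ne', (hLβpos i).ne', (hL i).ne']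
          linear_combination (-(G ^ 2)) * hk
        rw [e]
        have := mul_le_mul_of_nonneg_left hd' (hppos i).le
        have := mul_le_mul_of_nonneg_left this (by positivity : (0:ℝ) ≤ η ^ 2 * Sα ^ 2)
        linarith
      have hrw : 1 / 2 * (p i * W)
          - 1 / 2 * (p i * (W - 2 * L i ^ β * ci * ((zk - u) i) + L i ^ β * ci ^ 2))
          = η * G * (zk i - u i) - 1 / 2 * (η * G * ci) := by
        rw [hvi]
        linear_combination (zk i - u i - ci / 2) * hc1
      have e2 : 1 / 2 * (η * G * ci) = η ^ 2 * G ^ 2 / (2 * (p i * L i ^ β)) := by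
        rw [hci]
        field_simp
      linarith [h2, hrw.le, hrw.ge, e2.le, e2.ge]
    calc η * (∑ i, coordGrad f xk1 i * (zk i - u i))
        = ∑ i, η * (coordGrad f xk1 i * (zk i - u i)) := Finset.mul_sum _ _ _
      _ ≤ ∑ i, (η ^ 2 * Sα ^ 2 * (p i * (f xk1 - f (Y i)))
            + 1 / 2 * (p i * wnormSq L β (zk - u))
            - 1 / 2 * (p i * wnormSq L β (Z i - u))) := Finset.sum_le_sum per
      _ = η ^ 2 * Sα ^ 2 * (f xk1 - ∑ i, p i * f (Y i))
            + (1 / 2) * wnormSq L β (zk - u)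
            - (1 / 2) * ∑ i, p i * wnormSq L β (Z i - u) := by
          rw [Finset.sum_sub_distrib, Finset.sum_add_distrib, ← Finset.mul_sum, ← Finset.mul_sum,
            ← Finset.mul_sum]
          have hW : ∑ i, p i * wnormSq L β (zk - u) = wnormSq L β (zk - u) := by
            rw [← Finset.sum_mul, hpsum, one_mul]
          have hF : ∑ i, p i * (f xk1 - f (Y i)) = f xk1 - ∑ i, p i * f (Y i) := by
            simp only [mul_sub]
            rw [Finset.sum_sub_distrib, ← Finset.sum_mul, hpsum, one_mul]
          rw [hW, hF]
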